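/- Let A be a Hermitian n×n complex matrix with (necessarily real) eigenvalues λ_1, …, λ_n listed with multiplicity, and let φ : ℝ → ℝ be a convex function. Then Σ_{j=1}^n φ(a_{jj}) ≤ Σ_{k=1}^n φ(λ_k), where a_{jj} denotes the (real) j-th diagonal entry of A. -/

import Mathlib

noncomputable section

/-- matrix Jensen inequality.  For a Hermitian matrix `A` with eigenvalues
`λ_1, …, λ_n` (with multiplicity) and a convex `φ : ℝ → ℝ`, one has
`∑ j, φ(a_{jj}) ≤ ∑ k, φ(λ_k)`. -/
theorem matrix_jensen_inequality
    (n : ℕ) (hn : 1 ≤ n) (A : Matrix (Fin n) (Fin n) ℂ) (hA : A.IsHermitian)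
    (φ : ℝ → ℝ) (hφ : ConvexOn ℝ Set.univ φ) :
    ∑ j, φ (A j j).re ≤ ∑ k, φ (hA.eigenvalues k) := by
  set U : Matrix (Fin n) (Fin n) ℂ := (hA.eigenvectorUnitary : Matrix (Fin n) (Fin n) ℂ) with hU
  set w : Fin n → Fin n → ℝ := fun j k => Complex.normSq (U j k) with hw
  have hw0 : ∀ j k, 0 ≤ w j k := fun j k => Complex.normSq_nonneg _
  have hrow : ∀ j, ∑ k, w j k = 1 := by
    intro j
    have h1 : U * star U = 1 := Unitary.mul_star_self_of_mem hA.eigenvectorUnitary.2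
    have := congrArg (fun M => M j j) h1
    simp only [Matrix.mul_apply, Matrix.one_apply_eq, Matrix.star_apply] at this
    have : (∑ k, U j k * star (U j k)) = 1 := this
    have h2 := congrArg Complex.re this
    simpa [Complex.mul_conj, ← Complex.ofReal_sum] using h2
  have hcol : ∀ k, ∑ j, w j k = 1 := by
    intro k
    have h1 : star U * U = 1 := Unitary.star_mul_self_of_mem hA.eigenvectorUnitary.2
    have := congrArg (fun M => M k k) h1
    simp only [Matrix.mul_apply, Matrix.one_apply_eq, Matrix.star_apply] at this
    have : (∑ j, star (U j k) * U j k) = 1 := this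
    have h2 := congrArg Complex.re this
    simpa [mul_comm, Complex.mul_conj, ← Complex.ofReal_sum] using h2
  have hdiag : ∀ j, (A j j).re = ∑ k, w j k • hA.eigenvalues k := by
    intro j
    conv_lhs => rw [hA.spectral_theorem, Unitary.conjStarAlgAut_apply]
    rw [← hU]
    simp only [Matrix.mul_apply, Matrix.diagonal_apply, Function.comp_apply, Matrix.star_apply,
      mul_ite, ite_mul, mul_zero, zero_mul, Finset.sum_ite_eq, Finset.sum_ite_eq', Finset.mem_univ, if_true,
      Finset.sum_mul]
    rw [Complex.re_sum]
    refine Finset.sum_congr rfl fun k _ => ?_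
    have : U j k * (RCLike.ofReal (hA.eigenvalues k) : ℂ) * star (U j k)
        = ((w j k * hA.eigenvalues k : ℝ) : ℂ) := by
      rw [mul_comm (U j k) _, mul_assoc]
      rw [show (star (U j k)) = (starRingEnd ℂ) (U j k) from rfl, Complex.mul_conj]
      rw [show (RCLike.ofReal (hA.eigenvalues k) : ℂ) = ((hA.eigenvalues k : ℝ) : ℂ) from rfl]
      push_cast
      ring
    rw [this]
    simp [smul_eq_mul]
  calc ∑ j, φ (A j j).re
      ≤ ∑ j, ∑ k, w j k * φ (hA.eigenvalues k) := by
        refine Finset.sum_le_sum fun j _ => ?_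
        rw [hdiag j]
        exact hφ.map_sum_le (fun k _ => hw0 j k) (hrow j) (fun k _ => Set.mem_univ _)
    _ = ∑ k, (∑ j, w j k) * φ (hA.eigenvalues k) := by
        rw [Finset.sum_comm]
        simp [Finset.sum_mul]
    _ = ∑ k, φ (hA.eigenvalues k) := by simp [hcol]
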